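/- Let ψ : Q → ℝ be convex on a cube Q = [0,1]^n (with respect to full convexity on Q) with ∂²ψ/∂x_i² ≤ M for each i = 1,…,n at every point of Q, for some M ≥ 0. Then f = exp(-ψ) satisfies f(λx + (1-λ)y) ≤ e^{M/8}[λf(x) + (1-λ)f(y)] for all 0 < λ < 1 and all x, y ∈ Q such that x - y is proportional to a standard unit vector. -/

import Mathlib

open Set

lemma key_one_dim (M : ℝ) (hM : 0 ≤ M) (g g1 g2 : ℝ → ℝ)
    (h1 : ∀ t ∈ Icc (0:ℝ) 1, HasDerivWithinAt g (g1 t) (Icc 0 1) t)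
    (h2 : ∀ t ∈ Icc (0:ℝ) 1, HasDerivWithinAt g1 (g2 t) (Icc 0 1) t)
    (hb : ∀ t ∈ Icc (0:ℝ) 1, g2 t ≤ M)
    (a b : ℝ) (ha : a ∈ Icc (0:ℝ) 1) (hb' : b ∈ Icc (0:ℝ) 1)
    (l : ℝ) (hl : 0 < l) (hl1 : l < 1) :
    l * g a + (1 - l) * g b - M / 8 ≤ g (l * a + (1 - l) * b) := by
  set u : ℝ → ℝ := fun t => M / 2 * t ^ 2 - g t with hu_def
  set u' : ℝ → ℝ := fun t => M * t - g1 t with hu'_def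
  have hsq : ∀ t : ℝ, HasDerivAt (fun s => M / 2 * s ^ 2) (M * t) t := by
    intro t
    have : HasDerivAt (fun s => M / 2 * s ^ 2) (M / 2 * ((2:ℕ) * t ^ (2 - 1))) t :=
      (hasDerivAt_pow 2 t).const_mul (M / 2)
    convert this using 1
    push_cast
    ring
  have hu : ∀ t ∈ Icc (0:ℝ) 1, HasDerivWithinAt u (u' t) (Icc 0 1) t := by
    intro t ht
    exact ((hsq t).hasDerivWithinAt).sub (h1 t ht)
  have hu' : ∀ t ∈ Icc (0:ℝ) 1, HasDerivWithinAt u' (M - g2 t) (Icc 0 1) t := by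
    intro t ht
    have : HasDerivWithinAt u' (M * 1 - g2 t) (Icc 0 1) t :=
      ((hasDerivAt_id t).const_mul M).hasDerivWithinAt.sub (h2 t ht)
    simpa using this
  have hu'mono : MonotoneOn u' (Icc (0:ℝ) 1) := by
    apply monotoneOn_of_hasDerivWithinAt_nonneg (convex_Icc 0 1)
      (fun t ht => (hu' t ht).continuousWithinAt) (f' := fun t => M - g2 t)
    · intro t ht
      rw [interior_Icc] at ht ⊢
      exact (hu' t (Ioo_subset_Icc_self ht)).mono Ioo_subset_Icc_self
    · intro t ht
      rw [interior_Icc] at ht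
      have := hb t (Ioo_subset_Icc_self ht)
      linarith
  have huconv : ConvexOn ℝ (Icc (0:ℝ) 1) u := by
    apply MonotoneOn.convexOn_of_deriv (convex_Icc 0 1)
      (fun t ht => (hu t ht).continuousWithinAt)
    · intro t ht
      rw [interior_Icc] at ht ⊢
      exact ((hu t (Ioo_subset_Icc_self ht)).mono Ioo_subset_Icc_self).differentiableWithinAt
    · rw [interior_Icc]
      intro s hs t ht hst
      have hds : HasDerivAt u (u' s) s :=
        (hu s (Ioo_subset_Icc_self hs)).hasDerivAt (Icc_mem_nhds hs.1 hs.2)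
      have hdt : HasDerivAt u (u' t) t :=
        (hu t (Ioo_subset_Icc_self ht)).hasDerivAt (Icc_mem_nhds ht.1 ht.2)
      rw [hds.deriv, hdt.deriv]
      exact hu'mono (Ioo_subset_Icc_self hs) (Ioo_subset_Icc_self ht) hst
  have hcomb : u (l * a + (1 - l) * b) ≤ l * u a + (1 - l) * u b := by
    have := huconv.2 ha hb' hl.le (by linarith : (0:ℝ) ≤ 1 - l) (by ring)
    simpa [smul_eq_mul] using this
  have hq : l * (1 - l) * (a - b) ^ 2 ≤ 1 / 4 := by
    have h1 : (a - b) ^ 2 ≤ 1 := by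
      obtain ⟨ha0, ha1⟩ := ha; obtain ⟨hb0, hb1⟩ := hb'
      nlinarith
    have h2 : l * (1 - l) ≤ 1 / 4 := by nlinarith [sq_nonneg (2 * l - 1)]
    nlinarith [sq_nonneg (a - b), mul_pos hl (by linarith : (0:ℝ) < 1 - l)]
  have hexp : M / 2 * (l * (1 - l) * (a - b) ^ 2) ≤ M / 8 := by
    nlinarith
  simp only [hu_def] at hcomb
  nlinarith [hcomb]

theorem density_relaxed_convex_of_bounded_pure_second_derivatives
    (n : ℕ) (M : ℝ) (hM : 0 ≤ M) (ψ : (Fin n → ℝ) → ℝ)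
    (hconv : ConvexOn ℝ (Icc (0 : Fin n → ℝ) 1) ψ)
    (ψ' ψ'' : (Fin n → ℝ) → Fin n → ℝ)
    (hd1 : ∀ x ∈ Icc (0 : Fin n → ℝ) 1, ∀ i : Fin n,
      HasDerivWithinAt (fun t => ψ (Function.update x i t)) (ψ' x i) (Icc 0 1) (x i))
    (hd2 : ∀ x ∈ Icc (0 : Fin n → ℝ) 1, ∀ i : Fin n,
      HasDerivWithinAt (fun t => ψ' (Function.update x i t) i) (ψ'' x i) (Icc 0 1) (x i))
    (hbd : ∀ x ∈ Icc (0 : Fin n → ℝ) 1, ∀ i : Fin n, ψ'' x i ≤ M) :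
    ∀ x ∈ Icc (0 : Fin n → ℝ) 1, ∀ y ∈ Icc (0 : Fin n → ℝ) 1,
      (∃ i : Fin n, ∀ j : Fin n, j ≠ i → x j = y j) →
      ∀ l : ℝ, 0 < l → l < 1 →
        Real.exp (-ψ (l • x + (1 - l) • y)) ≤
          Real.exp (M / 8) *
            (l * Real.exp (-ψ x) + (1 - l) * Real.exp (-ψ y)) := by
  intro x hx y hy ⟨i, hi⟩ l hl hl1
  set z : ℝ → (Fin n → ℝ) := fun t => Function.update x i t with hz_def
  have hxmem : ∀ j, x j ∈ Icc (0:ℝ) 1 := fun j => ⟨hx.1 j, hx.2 j⟩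
  have hymem : ∀ j, y j ∈ Icc (0:ℝ) 1 := fun j => ⟨hy.1 j, hy.2 j⟩
  have hzmem : ∀ t ∈ Icc (0:ℝ) 1, z t ∈ Icc (0 : Fin n → ℝ) 1 := by
    intro t ht
    constructor <;> intro j <;> by_cases hj : j = i <;>
      simp [hz_def, hj, Function.update, ht.1, ht.2, (hxmem j).1, (hxmem j).2]
  have hzi : ∀ t : ℝ, (z t) i = t := fun t => Function.update_self i t x
  have hzx : z (x i) = x := Function.update_eq_self i x
  have hzy : z (y i) = y := by
    funext j
    by_cases hj : j = i
    · subst hj; exact hzi (y j)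
    · simp [hz_def, Function.update_of_ne hj, hi j hj]
  have hzc : l • x + (1 - l) • y = z (l * x i + (1 - l) * y i) := by
    funext j
    by_cases hj : j = i
    · subst hj; simp [hzi, Pi.add_apply]
    · simp [hz_def, Function.update_of_ne hj, Pi.add_apply, hi j hj]
      ring
  set g : ℝ → ℝ := fun t => ψ (z t) with hg_def
  set g1 : ℝ → ℝ := fun t => ψ' (z t) i with hg1_def
  set g2 : ℝ → ℝ := fun t => ψ'' (z t) i with hg2_def
  have hupd : ∀ t s : ℝ, Function.update (z t) i s = z s := by
    intro t s; simp [hz_def, Function.update_idem]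
  have h1 : ∀ t ∈ Icc (0:ℝ) 1, HasDerivWithinAt g (g1 t) (Icc 0 1) t := by
    intro t ht
    have := hd1 (z t) (hzmem t ht) i
    simp only [hupd, hzi] at this
    exact this
  have h2 : ∀ t ∈ Icc (0:ℝ) 1, HasDerivWithinAt g1 (g2 t) (Icc 0 1) t := by
    intro t ht
    have := hd2 (z t) (hzmem t ht) i
    simp only [hupd, hzi] at this
    exact this
  have hbd' : ∀ t ∈ Icc (0:ℝ) 1, g2 t ≤ M := fun t ht => hbd (z t) (hzmem t ht) i
  have hkey := key_one_dim M hM g g1 g2 h1 h2 hbd' (x i) (y i)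
    (hxmem i) (hymem i) l hl hl1
  rw [hg_def] at hkey
  simp only [hzx, hzy] at hkey
  -- hkey : l * ψ x + (1 - l) * ψ y - M/8 ≤ ψ (z (l * x i + (1 - l) * y i))
  rw [hzc]
  have step1 : Real.exp (-ψ (z (l * x i + (1 - l) * y i))) ≤
      Real.exp (M / 8 + (l * (-ψ x) + (1 - l) * (-ψ y))) := by
    apply Real.exp_le_exp.2
    linarith
  refine step1.trans ?_
  rw [Real.exp_add]
  have step2 : Real.exp (l * (-ψ x) + (1 - l) * (-ψ y)) ≤
      l * Real.exp (-ψ x) + (1 - l) * Real.exp (-ψ y) := by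
    have := convexOn_exp.2 (mem_univ (-ψ x)) (mem_univ (-ψ y)) hl.le
      (by linarith : (0:ℝ) ≤ 1 - l) (by ring)
    simpa [smul_eq_mul] using this
  exact mul_le_mul_of_nonneg_left step2 (Real.exp_pos _).le
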